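/- For the 3-dimensional algebra U₁ˢ (type (2,1)) with only nonzero product e₁e₁ = e₁, the basis change E₁ᵗ = t·e₁ + e₂, E₂ᵗ = t²·e₁, F₁ᵗ = f₁ (t ≠ 0) produces structure constants converging as t → 0 to those of B₃ˢ: E₁E₁ = E₂ and all other products zero. -/
import Mathlib


open Filter

/-- The multiplication of the (2,1)-dimensional algebra U₁ˢ on ℂ³ with coordinates
(e₁, e₂; f₁) and only nonzero product e₁e₁ = e₁. -/
noncomputable def muU1 : ℂ × ℂ × ℂ → ℂ × ℂ × ℂ → ℂ × ℂ × ℂ :=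
  fun x y => (x.1 * y.1, 0, 0)

noncomputable def E1 (t : ℂ) : ℂ × ℂ × ℂ := (t, 1, 0)    -- E₁ᵗ = t·e₁ + e₂
noncomputable def E2 (t : ℂ) : ℂ × ℂ × ℂ := (t ^ 2, 0, 0) -- E₂ᵗ = t²·e₁
noncomputable def F1 : ℂ × ℂ × ℂ := (0, 0, 1)            -- F₁ = f₁

/-- The basis change E₁ᵗ = t·e₁+e₂, E₂ᵗ = t²·e₁, F₁ᵗ = f₁ of U₁ˢ produces structure
constants converging as t → 0 to those of B₃ˢ: E₁E₁ = E₂ and all other products zero. -/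
theorem degeneration_U1s_to_B3s :
    (∀ t : ℂ, t ≠ 0 →
      muU1 (E1 t) (E1 t) = E2 t ∧
      muU1 (E1 t) (E2 t) = t • E2 t ∧ muU1 (E2 t) (E1 t) = t • E2 t ∧
      muU1 (E2 t) (E2 t) = (t ^ 2) • E2 t ∧
      muU1 (E1 t) F1 = 0 ∧ muU1 F1 (E1 t) = 0 ∧
      muU1 (E2 t) F1 = 0 ∧ muU1 F1 (E2 t) = 0 ∧ muU1 F1 F1 = 0) ∧
    Tendsto (fun t : ℂ => t) (nhdsWithin 0 {(0 : ℂ)}ᶜ) (nhds 0) ∧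
    Tendsto (fun t : ℂ => t ^ 2) (nhdsWithin 0 {(0 : ℂ)}ᶜ) (nhds 0) := by
  refine ⟨fun t ht => ?_, tendsto_id.mono_left nhdsWithin_le_nhds, ?_⟩
  · simp [muU1, E1, E2, F1, Prod.ext_iff, smul_eq_mul]; ring_nf; simp
  · exact ((continuous_pow 2).tendsto 0).mono_left nhdsWithin_le_nhds |>.congr' (by simp) |>.mono_right (by simp)
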